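/- arXiv:1206.3691 — 2 statements merged into one kernel-verified Lean document; each statement's English description precedes it below -/
import Mathlib

section
/- Let y solve y'(t)=D(y*−y(t))−b̃(y(t)) on [0,1] with y(0)=y₀∈[0,y*], where b̃(y)=b(y)/R+η·1_{y>0} and b bounded by b_∞. Then there is a constant c>0, independent of y₀∈[0,y*], such that y(t)≥c·t for all t∈[0,1], provided D y* > b̃(0⁺)=η (i.e., the right-hand side at y=0 is positive). -/
/-- uniform linear lower bound y(t) ≥ c·t on [0,1] for solutions of
    y' = D(y*−y) − b̃(y), with b̃(y)=b(y)/R+η·1_{y>0}, provided D y* > η,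
    with c independent of the initial condition y₀ ∈ [0,y*]. -/
theorem stmt9 (D ystar R η binf : ℝ) (hD : 0 < D) (hystar : 0 < ystar)
    (hR : 0 < R) (hη : 0 ≤ η) (hpos : η < D * ystar)
    (b : ℝ → ℝ) (hb_cont : ContinuousOn b (Set.Ici 0))
    (hb_mono : MonotoneOn b (Set.Ici 0)) (hb0 : b 0 = 0)
    (hb_bound : ∀ y ≥ (0:ℝ), b y ≤ binf) :
    ∃ c > (0:ℝ), ∀ y : ℝ → ℝ, y 0 ∈ Set.Icc 0 ystar →
      (∀ t ∈ Set.Icc (0:ℝ) 1,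
        HasDerivAt y
          (D * (ystar - y t) - (b (y t) / R + if 0 < y t then η else 0)) t) →
      ∀ t ∈ Set.Icc (0:ℝ) 1, c * t ≤ y t := by
  set M : ℝ := D * ystar - η with hMdef
  have hM : 0 < M := by simp [hMdef]; linarith
  -- choose δ0 from continuity of b at 0
  have hcont0 : Filter.Tendsto b (nhdsWithin 0 (Set.Ici 0)) (nhds 0) := by
    have := hb_cont 0 Set.self_mem_Ici
    simpa [ContinuousWithinAt, hb0] using this
  have hev : ∀ᶠ x in nhdsWithin 0 (Set.Ici 0), b x < R * (M/4) := by
    have : Set.Iio (R * (M/4)) ∈ nhds (0:ℝ) :=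
      Iio_mem_nhds (by positivity)
    exact hcont0 this
  obtain ⟨δ0, hδ0pos, hδ0⟩ : ∃ δ0 > 0, ∀ x ∈ Set.Ico (0:ℝ) δ0, b x < R * (M/4) := by
    rw [Filter.eventually_iff, mem_nhdsGE_iff_exists_Ico_subset] at hev
    obtain ⟨u, hu, hsub⟩ := hev
    exact ⟨u, hu, fun x hx => hsub hx⟩
  set δ : ℝ := min (δ0/2) (M/(4*D)) with hδdef
  have hδpos : 0 < δ := by
    apply lt_min (by linarith) (by positivity)
  have hδlt : δ < δ0 := lt_of_le_of_lt (min_le_left _ _) (by linarith)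
  have hDδ : D * δ ≤ M/4 := by
    have : δ ≤ M/(4*D) := min_le_right _ _
    calc D * δ ≤ D * (M/(4*D)) := by nlinarith
      _ = M/4 := by field_simp
  have hbδ : b δ / R ≤ M/4 := by
    have := hδ0 δ ⟨le_of_lt hδpos, hδlt⟩
    rw [div_le_iff₀ hR]
    nlinarith
  set ε : ℝ := M/4 with hεdef
  have hεpos : 0 < ε := by positivity
  refine ⟨min δ ε, lt_min hδpos hεpos, ?_⟩
  intro y hy0 hyd
  -- main claim: ψ t ≤ y t where ψ t = min δ (ε * t)
  have main : ∀ t ∈ Set.Icc (0:ℝ) 1, min δ (ε * t) ≤ y t := by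
    intro t1 ht1
    by_contra hlt
    push_neg at hlt
    set ψ : ℝ → ℝ := fun t => min δ (ε * t) with hψdef
    have hψcont : Continuous ψ := by fun_prop
    have hycont : ∀ t ∈ Set.Icc (0:ℝ) 1, ContinuousAt y t :=
      fun t ht => (hyd t ht).continuousAt
    have ht10 : 0 ≤ t1 := ht1.1
    have hIsub : Set.Icc 0 t1 ⊆ Set.Icc (0:ℝ) 1 :=
      Set.Icc_subset_Icc le_rfl ht1.2
    have hyconOn : ContinuousOn y (Set.Icc 0 t1) :=
      fun t ht => ((hycont t (hIsub ht)).continuousWithinAt)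
    have hhcont : ContinuousOn (fun t => y t - ψ t) (Set.Icc 0 t1) :=
      hyconOn.sub hψcont.continuousOn
    have hψ0 : ψ 0 = 0 := by simp [hψdef, le_of_lt hδpos]
    have hh0 : 0 ≤ y 0 - ψ 0 := by rw [hψ0]; simpa using hy0.1
    have hht1 : y t1 - ψ t1 < 0 := by simp only [hψdef]; linarith [hlt]
    -- zero set
    set Z : Set ℝ := Set.Icc 0 t1 ∩ (fun t => y t - ψ t) ⁻¹' {0} with hZdef
    have hZne : Z.Nonempty := by
      have : (0:ℝ) ∈ Set.Icc (y t1 - ψ t1) (y 0 - ψ 0) := ⟨le_of_lt hht1, hh0⟩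
      obtain ⟨t0, ht0, heq⟩ := intermediate_value_Icc' ht10 hhcont this
      exact ⟨t0, ht0, heq⟩
    have hZcl : IsClosed Z :=
      hhcont.preimage_isClosed_of_isClosed isClosed_Icc isClosed_singleton
    have hZbdd : BddAbove Z := BddAbove.mono (Set.inter_subset_left) bddAbove_Icc
    set t0 : ℝ := sSup Z with ht0def
    have ht0Z : t0 ∈ Z := hZcl.csSup_mem hZne hZbdd
    have ht0mem : t0 ∈ Set.Icc 0 t1 := ht0Z.1
    have heq0 : y t0 = ψ t0 := by have := ht0Z.2; simp at this; linarith
    have ht0lt : t0 < t1 := by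
      rcases lt_or_eq_of_le ht0mem.2 with h | h
      · exact h
      · exfalso; rw [h] at heq0; rw [heq0] at hht1; simp at hht1
    -- after t0, y < ψ
    have hafter : ∀ s ∈ Set.Ioc t0 t1, y s - ψ s < 0 := by
      intro s hs
      by_contra hge
      push_neg at hge
      have hsmem : s ∈ Set.Icc 0 t1 := ⟨le_trans ht0mem.1 (le_of_lt hs.1), hs.2⟩
      have : (0:ℝ) ∈ Set.Icc (y t1 - ψ t1) (y s - ψ s) := ⟨le_of_lt hht1, hge⟩
      obtain ⟨u, hu, hequ⟩ := intermediate_value_Icc' hs.2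
        (hhcont.mono (Set.Icc_subset_Icc hsmem.1 le_rfl)) this
      have huZ : u ∈ Z := ⟨⟨le_trans hsmem.1 hu.1, hu.2⟩, hequ⟩
      have := le_csSup hZbdd huZ
      have := hs.1
      linarith [hu.1]
    -- derivative bound at t0
    have hyt0 : y t0 ∈ Set.Icc 0 δ := by
      rw [heq0]
      exact ⟨le_min (le_of_lt hδpos) (mul_nonneg (le_of_lt hεpos) ht0mem.1),
        min_le_left _ _⟩
    have hFb : 2*ε ≤ D * (ystar - y t0) - (b (y t0) / R + if 0 < y t0 then η else 0) := by
      have h1 : b (y t0) ≤ b δ := hb_mono hyt0.1 (le_of_lt hδpos) hyt0.2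
      have h2 : b (y t0) / R ≤ ε := le_trans (by gcongr) hbδ
      have h3 : (if 0 < y t0 then η else 0) ≤ η := by split <;> linarith
      have h4 : D * y t0 ≤ ε := by nlinarith [hyt0.2, hyt0.1]
      have h5 : D*(ystar - y t0) = D*ystar - D*(y t0) := by ring
      have hεM : ε = (D*ystar - η)/4 := by rw [hεdef, hMdef]
      rw [h5]
      linarith
    have hder := hyd t0 (hIsub ht0mem)
    rw [hasDerivAt_iff_tendsto_slope] at hder
    have hevs : ∀ᶠ u in nhdsWithin t0 {t0}ᶜ, ε < slope y t0 u :=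
      hder.eventually_const_lt (by linarith)
    have hevs' : ∀ᶠ u in nhdsWithin t0 (Set.Ioi t0), ε < slope y t0 u :=
      hevs.filter_mono (nhdsWithin_mono _ (fun u hu => ne_of_gt hu))
    have hmem : Set.Ioc t0 t1 ∈ nhdsWithin t0 (Set.Ioi t0) :=
      Ioc_mem_nhdsGT ht0lt
    obtain ⟨u, hsl, hu⟩ :=
      (hevs'.and (Filter.eventually_of_mem hmem fun _ h => h)).exists
    have hut0 : 0 < u - t0 := by linarith [hu.1]
    have hyslope : ε * (u - t0) < y u - y t0 := by
      rw [slope_def_field] at hsl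
      calc ε * (u - t0) < (y u - y t0)/(u - t0) * (u - t0) := by
            exact mul_lt_mul_of_pos_right hsl hut0
        _ = y u - y t0 := by field_simp
    have hψlip : ψ u ≤ ψ t0 + ε * (u - t0) := by
      rcases le_total (ε * t0) δ with h | h
      · have he : ψ t0 = ε * t0 := min_eq_right h
        calc ψ u ≤ ε * u := min_le_right _ _
          _ = ε * t0 + ε * (u - t0) := by ring
          _ = ψ t0 + ε * (u - t0) := by rw [he]
      · have he : ψ t0 = δ := min_eq_left h
        calc ψ u ≤ δ := min_le_left _ _
          _ ≤ ψ t0 + ε * (u - t0) := by rw [he]; nlinarith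
    have := hafter u hu
    have heq0' : y t0 = ψ t0 := heq0
    linarith
  -- conclude
  intro t ht
  have := main t ht
  have h1 : min δ ε * t ≤ min δ (ε * t) := by
    apply le_min
    · calc min δ ε * t ≤ δ * t := by nlinarith [min_le_left δ ε, ht.1]
        _ ≤ δ * 1 := by nlinarith [hδpos, ht.2]
        _ = δ := mul_one δ
    · nlinarith [min_le_right δ ε, ht.1]
  linarith
end

section
/- Let G:ℝ→ℝ be C¹ with a simple zero at y₁ (G(y₁)=0, G'(y₁)<0), let f be bounded measurable, h continuous with h≥0 near y₁, and let u be an integrable function on a neighborhood of y₁ satisfying (G u)'(y)=f(y)G(y)u(y)+h(y) for y≠y₁. Then u(y) = (1/G(y))·exp(∫_{y₁}^y f) · ∫_{y₁}^y exp(−∫_{y₁}^s f) h(s) ds, and if h>0 on a set of positive measure on one side of y₁ then u<0 somewhere there. -/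
open MeasureTheory intervalIntegral Set Topology Filter

lemma aux_intInt {f : ℝ → ℝ} {M : ℝ} (hf : Measurable f) (hfb : ∀ y, |f y| ≤ M) (a b : ℝ) :
    IntervalIntegrable f volume a b := by
  constructor <;>
  · refine Integrable.mono' (g := fun _ => M) (integrableOn_const measure_Ioc_lt_top.ne)
      hf.aestronglyMeasurable.restrict ?_
    filter_upwards with y using by simpa using hfb y

lemma aux_expLip {A x y : ℝ} (hx : x ≤ A) (hy : y ≤ A) :
    |Real.exp x - Real.exp y| ≤ Real.exp A * |x - y| := by
  wlog hxy : y ≤ x generalizing x y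
  · rw [abs_sub_comm, abs_sub_comm x y]; exact this hy hx (le_of_not_ge hxy)
  rw [abs_of_nonneg (sub_nonneg.2 (Real.exp_le_exp.2 hxy)), abs_of_nonneg (sub_nonneg.2 hxy)]
  have e : Real.exp y = Real.exp x * Real.exp (y - x) := by rw [← Real.exp_add]; ring_nf
  nlinarith [Real.add_one_le_exp (y - x), Real.exp_pos x, Real.exp_le_exp.2 hx,
    mul_le_mul_of_nonneg_right (Real.exp_le_exp.2 hx) (sub_nonneg.2 hxy)]

lemma aux_star {f h v : ℝ → ℝ} {M : ℝ} (hf : Measurable f) (hfb : ∀ y, |f y| ≤ M)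
    (hh : Continuous h) (y₁ a b : ℝ) (hab : a ≤ b)
    (hv : ∀ y ∈ Set.Icc a b, HasDerivAt v (f y * v y + h y) y) :
    Real.exp (-(∫ s in y₁..b, f s)) * v b - Real.exp (-(∫ s in y₁..a, f s)) * v a
      = ∫ s in a..b, Real.exp (-(∫ w in y₁..s, f w)) * h s := by
  have hM : 0 ≤ M := (abs_nonneg _).trans (hfb 0)
  set c : ℝ := min y₁ a with hc
  set d : ℝ := max y₁ b with hd
  have hcd : c ≤ d := le_trans (min_le_left _ _) (le_max_left _ _)
  have hy₁cd : y₁ ∈ Icc c d := ⟨min_le_left _ _, le_max_left _ _⟩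
  have hsubab : Icc a b ⊆ Icc c d :=
    Icc_subset_Icc (min_le_right _ _) (le_max_right _ _)
  set A : ℝ := M * (d - c) with hA
  set E : ℝ := Real.exp A with hE
  have hEpos : 0 < E := Real.exp_pos _
  have habs : ∀ s ∈ Icc c d, |s - y₁| ≤ d - c := by
    intro s hs
    rw [abs_sub_le_iff]
    constructor <;> [linarith [hs.2, hy₁cd.1]; linarith [hs.1, hy₁cd.2]]
  have hFbd : ∀ s ∈ Icc c d, |∫ w in y₁..s, f w| ≤ A := by
    intro s hs
    calc |∫ w in y₁..s, f w| ≤ M * |s - y₁| := by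
          simpa [Real.norm_eq_abs] using
            intervalIntegral.norm_integral_le_of_norm_le_const
              (C := M) (f := f) (a := y₁) (b := s)
              (fun x _ => by simpa [Real.norm_eq_abs] using hfb x)
    _ ≤ A := by rw [hA]; exact mul_le_mul_of_nonneg_left (habs s hs) hM
  have hvc : ContinuousOn v (Icc a b) := fun y hy => ((hv y hy).continuousAt).continuousWithinAt
  obtain ⟨V, hV⟩ := isCompact_Icc.exists_bound_of_continuousOn hvc
  have hVnn : 0 ≤ V := le_trans (norm_nonneg _) (hV a (left_mem_Icc.2 hab))
  obtain ⟨Hb, hHb⟩ := isCompact_Icc.exists_bound_of_continuousOn (hh.continuousOn (s := Icc a b))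
  have hHbnn : 0 ≤ Hb := le_trans (norm_nonneg _) (hHb a (left_mem_Icc.2 hab))
  have hba : 0 ≤ b - a := sub_nonneg.2 hab
  set K : ℝ := E * (3 * V + Hb * (b - a)) with hK
  have hKnn : 0 ≤ K := by positivity
  set LHS : ℝ := Real.exp (-(∫ s in y₁..b, f s)) * v b - Real.exp (-(∫ s in y₁..a, f s)) * v a
    with hLHS
  set RHS : ℝ := ∫ s in a..b, Real.exp (-(∫ w in y₁..s, f w)) * h s with hRHS
  show LHS = RHS
  suffices key : ∀ η > 0, |LHS - RHS| ≤ K * η by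
    have h0 : |LHS - RHS| ≤ 0 := by
      refine le_of_forall_pos_le_add fun ξ hξ => ?_
      have h1 := key (ξ / (K + 1)) (by positivity)
      have h2 : K * (ξ / (K + 1)) ≤ ξ := by
        have e2 : K * (ξ / (K + 1)) = K * ξ / (K + 1) := by ring
        rw [e2, div_le_iff₀ (by linarith)]
        nlinarith
      linarith
    have h3 : LHS - RHS = 0 := abs_nonpos_iff.1 h0
    linarith
  intro η hη
  -- approximate f by a continuous g with |g| ≤ M
  have hfIcc : IntegrableOn f (Icc c d) := by
    refine Integrable.mono' (g := fun _ => M) (integrableOn_const measure_Icc_lt_top.ne)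
      hf.aestronglyMeasurable.restrict ?_
    filter_upwards with y using by simpa using hfb y
  set f1 : ℝ → ℝ := (Icc c d).indicator f with hf1def
  have hf1int : Integrable f1 volume := (integrable_indicator_iff measurableSet_Icc).2 hfIcc
  obtain ⟨g₀, hg₀supp, hg₀close, hg₀cont, hg₀int⟩ :=
    hf1int.exists_hasCompactSupport_integral_sub_le hη
  set g : ℝ → ℝ := fun x => max (-M) (min M (g₀ x)) with hgdef
  have hgcont : Continuous g := continuous_const.max (continuous_const.min hg₀cont)
  have hgbd : ∀ x, |g x| ≤ M := fun x =>
    abs_le.2 ⟨le_max_left _ _, max_le (neg_le_self hM) (min_le_left _ _)⟩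
  have hf1bd : ∀ x, |f1 x| ≤ M := by
    intro x
    rw [hf1def]
    by_cases hx : x ∈ Icc c d
    · rw [indicator_of_mem hx]; exact hfb x
    · rw [indicator_of_notMem hx]; simpa using hM
  have hclose : ∀ x, |f1 x - g x| ≤ |f1 x - g₀ x| := by
    intro x
    have h1 := abs_le.1 (hf1bd x)
    have h2 : f1 x = max (-M) (min M (f1 x)) := by
      rw [min_eq_right h1.2, max_eq_right h1.1]
    calc |f1 x - g x| = |max (min M (f1 x)) (-M) - max (min M (g₀ x)) (-M)| := by
          rw [max_comm, max_comm (min M (g₀ x)), ← h2]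
    _ ≤ |min M (f1 x) - min M (g₀ x)| := abs_max_sub_max_le_abs _ _ _
    _ ≤ max |M - M| |f1 x - g₀ x| := abs_min_sub_min_le_max _ _ _ _
    _ = |f1 x - g₀ x| := by simp
  have hgc : HasCompactSupport g := by
    refine hg₀supp.mono ?_
    intro x hx
    simp only [Function.mem_support] at hx ⊢
    intro h0
    apply hx
    rw [hgdef]
    simp only [h0, min_eq_right hM, max_eq_right (neg_nonpos.2 hM)]
  have hgint : Integrable g := hgcont.integrable_of_hasCompactSupport hgc
  have hint2 : (∫ x, |f1 x - g x|) ≤ η := by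
    calc (∫ x, |f1 x - g x|) ≤ ∫ x, ‖f1 x - g₀ x‖ := by
          refine integral_mono (hf1int.sub hgint).abs (hf1int.sub hg₀int).norm ?_
          intro x
          simpa [Real.norm_eq_abs] using hclose x
    _ ≤ η := hg₀close
  -- integral of |f - g| over subintervals of [c,d] is ≤ η
  have habsint : IntegrableOn (fun x => |f x - g x|) (Icc c d) :=
    (hfIcc.sub hgint.integrableOn).abs
  have hIab : ∀ s t : ℝ, s ∈ Icc c d → t ∈ Icc c d → (∫ x in Set.uIoc t s, |f x - g x|) ≤ η := by
    intro s t hs ht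
    have hsub2 : Set.uIoc t s ⊆ Icc c d := by
      refine Set.Ioc_subset_Icc_self.trans (Icc_subset_Icc ?_ ?_)
      · exact le_min ht.1 hs.1
      · exact max_le ht.2 hs.2
    calc (∫ x in Set.uIoc t s, |f x - g x|) ≤ ∫ x in Icc c d, |f x - g x| := by
          refine setIntegral_mono_set habsint ?_ hsub2.eventuallyLE
          filter_upwards with x using abs_nonneg _
    _ = ∫ x in Icc c d, |f1 x - g x| := by
          refine setIntegral_congr_fun measurableSet_Icc fun x hx => ?_
          rw [hf1def, indicator_of_mem hx]
    _ ≤ ∫ x, |f1 x - g x| := by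
          refine setIntegral_le_integral (hf1int.sub hgint).abs ?_
          filter_upwards with x using abs_nonneg _
    _ ≤ η := hint2
  have hFdiff : ∀ s ∈ Icc c d,
      |(∫ w in y₁..s, f w) - ∫ w in y₁..s, g w| ≤ η := by
    intro s hs
    rw [← intervalIntegral.integral_sub (aux_intInt hf hfb _ _) (hgcont.intervalIntegrable _ _)]
    have h5 := intervalIntegral.norm_integral_le_integral_norm_uIoc
      (f := fun x => f x - g x) (a := y₁) (b := s) (μ := volume)
    rw [Real.norm_eq_abs] at h5
    refine h5.trans ?_
    simpa [Real.norm_eq_abs] using hIab s y₁ hs hy₁cd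
  -- the approximate integrating factor
  set Fg : ℝ → ℝ := fun s => ∫ w in y₁..s, g w with hFgdef
  have hFg' : ∀ y, HasDerivAt Fg (g y) y := fun y =>
    (hgcont.integral_hasStrictDerivAt y₁ y).hasDerivAt
  have hFgc : Continuous Fg := Differentiable.continuous (f := Fg) fun y => (hFg' y).differentiableAt
  have hFgbd : ∀ s ∈ Icc c d, |Fg s| ≤ A := by
    intro s hs
    calc |Fg s| ≤ M * |s - y₁| := by
          simpa [Real.norm_eq_abs] using
            intervalIntegral.norm_integral_le_of_norm_le_const (C := M) (f := g) (a := y₁) (b := s)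
              (fun x _ => by simpa [Real.norm_eq_abs] using hgbd x)
    _ ≤ A := by rw [hA]; exact mul_le_mul_of_nonneg_left (habs s hs) hM
  have hEg : ∀ s ∈ Icc c d, Real.exp (-(Fg s)) ≤ E := fun s hs =>
    Real.exp_le_exp.2 ((neg_le_abs _).trans (hFgbd s hs))
  set φ : ℝ → ℝ := fun y => Real.exp (-(Fg y)) * v y with hφdef
  have hφ' : ∀ y ∈ Icc a b,
      HasDerivAt φ (Real.exp (-(Fg y)) * ((f y - g y) * v y + h y)) y := by
    intro y hy
    have h1 : HasDerivAt (fun z => Real.exp (-(Fg z))) (Real.exp (-(Fg y)) * (-(g y))) y := by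
      simpa using ((hFg' y).neg).exp
    have h2 : HasDerivAt (fun z => Real.exp (-(Fg z)) * v z)
        (Real.exp (-(Fg y)) * (-(g y)) * v y + Real.exp (-(Fg y)) * (f y * v y + h y)) y :=
      h1.mul (hv y hy)
    convert h2 using 1
    ring
  have hvmeas : AEStronglyMeasurable v (volume.restrict (Ioc a b)) :=
    (hvc.mono Ioc_subset_Icc_self).aestronglyMeasurable measurableSet_Ioc
  have hEgcont : Continuous fun y => Real.exp (-(Fg y)) := Real.continuous_exp.comp hFgc.neg
  have hint1 : IntervalIntegrable (fun y => Real.exp (-(Fg y)) * ((f y - g y) * v y))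
      volume a b := by
    rw [intervalIntegrable_iff_integrableOn_Ioc_of_le hab]
    refine Integrable.mono' (g := fun _ => E * (2 * M * V))
      (integrableOn_const measure_Ioc_lt_top.ne)
      ((hEgcont.aestronglyMeasurable.restrict).mul
        (((hf.sub hgcont.measurable).aestronglyMeasurable.restrict).mul hvmeas)) ?_
    filter_upwards [ae_restrict_mem measurableSet_Ioc] with y hy
    have hy' : y ∈ Icc a b := Ioc_subset_Icc_self hy
    have hycd : y ∈ Icc c d := hsubab hy'
    rw [Real.norm_eq_abs, abs_mul, abs_mul]
    have e1 : |Real.exp (-(Fg y))| ≤ E := by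
      rw [abs_of_pos (Real.exp_pos _)]; exact hEg y hycd
    have e2 : |f y - g y| ≤ 2 * M := by
      calc |f y - g y| ≤ |f y| + |g y| := abs_sub _ _
      _ ≤ 2 * M := by linarith [hfb y, hgbd y]
    have e3 : |v y| ≤ V := by rw [← Real.norm_eq_abs]; exact hV y hy'
    exact mul_le_mul e1 (mul_le_mul e2 e3 (abs_nonneg _) (by linarith)) (by positivity) hEpos.le
  have hint5 : IntervalIntegrable (fun y => Real.exp (-(Fg y)) * h y) volume a b :=
    (hEgcont.mul hh).intervalIntegrable _ _
  have hFcont : Continuous fun s => ∫ w in y₁..s, f w :=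
    intervalIntegral.continuous_primitive (fun p q => aux_intInt hf hfb p q) y₁
  have hEfcont : Continuous fun s => Real.exp (-(∫ w in y₁..s, f w)) :=
    Real.continuous_exp.comp hFcont.neg
  have hintRHS : IntervalIntegrable (fun s => Real.exp (-(∫ w in y₁..s, f w)) * h s)
      volume a b := (hEfcont.mul hh).intervalIntegrable _ _
  have hφint : IntervalIntegrable
      (fun y => Real.exp (-(Fg y)) * ((f y - g y) * v y + h y)) volume a b := by
    simp only [mul_add]
    exact hint1.add hint5
  have hFTC : (∫ y in a..b, Real.exp (-(Fg y)) * ((f y - g y) * v y + h y)) = φ b - φ a :=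
    integral_eq_sub_of_hasDerivAt (fun y hy => hφ' y (by rwa [uIcc_of_le hab] at hy)) hφint
  have hsplit : (∫ y in a..b, Real.exp (-(Fg y)) * ((f y - g y) * v y + h y))
      = (∫ y in a..b, Real.exp (-(Fg y)) * ((f y - g y) * v y))
        + ∫ y in a..b, Real.exp (-(Fg y)) * h y := by
    simp only [mul_add]
    exact intervalIntegral.integral_add hint1 hint5
  -- bounds
  have hexpdiff : ∀ s ∈ Icc c d,
      |Real.exp (-(∫ w in y₁..s, f w)) - Real.exp (-(Fg s))| ≤ E * η := by
    intro s hscd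
    have h6 := aux_expLip (A := A) (x := -(∫ w in y₁..s, f w)) (y := -(Fg s))
      ((neg_le_abs _).trans (hFbd s hscd)) ((neg_le_abs _).trans (hFgbd s hscd))
    have heq : |(-(∫ w in y₁..s, f w)) - (-(Fg s))| = |(∫ w in y₁..s, f w) - Fg s| := by
      rw [show (-(∫ w in y₁..s, f w)) - (-(Fg s)) = -((∫ w in y₁..s, f w) - Fg s) by ring,
        abs_neg]
    rw [heq] at h6
    refine h6.trans ?_
    rw [← hE]
    exact mul_le_mul_of_nonneg_left (hFdiff s hscd) hEpos.le
  have hb12 : ∀ s ∈ Icc a b,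
      |(Real.exp (-(∫ w in y₁..s, f w)) - Real.exp (-(Fg s))) * v s| ≤ E * η * V := by
    intro s hs
    rw [abs_mul]
    have e3 : |v s| ≤ V := by rw [← Real.norm_eq_abs]; exact hV s hs
    exact mul_le_mul (hexpdiff s (hsubab hs)) e3 (abs_nonneg _) (by positivity)
  have ha' : a ∈ Icc c d := hsubab (left_mem_Icc.2 hab)
  have hb' : b ∈ Icc c d := hsubab (right_mem_Icc.2 hab)
  have hb3 : |∫ y in a..b, Real.exp (-(Fg y)) * ((f y - g y) * v y)| ≤ E * V * η := by
    have h5 := intervalIntegral.norm_integral_le_integral_norm_uIoc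
      (f := fun y => Real.exp (-(Fg y)) * ((f y - g y) * v y)) (a := a) (b := b) (μ := volume)
    rw [Real.norm_eq_abs] at h5
    refine h5.trans ?_
    have hIocsub : Set.uIoc a b ⊆ Icc c d := by
      rw [uIoc_of_le hab]
      exact Ioc_subset_Icc_self.trans (Icc_subset_Icc ha'.1 hb'.2)
    have hmono : (∫ y in Set.uIoc a b, ‖Real.exp (-(Fg y)) * ((f y - g y) * v y)‖)
        ≤ ∫ y in Set.uIoc a b, (E * V) * |f y - g y| := by
      rw [uIoc_of_le hab]
      refine setIntegral_mono_on
        ((intervalIntegrable_iff_integrableOn_Ioc_of_le hab).1 hint1).norm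
        (MeasureTheory.IntegrableOn.mono_set (habsint.const_mul (E * V))
          (by rw [← uIoc_of_le hab]; exact hIocsub)) measurableSet_Ioc ?_
      intro y hy
      have hy' : y ∈ Icc a b := Ioc_subset_Icc_self hy
      have hycd : y ∈ Icc c d := hsubab hy'
      rw [Real.norm_eq_abs, abs_mul, abs_mul, abs_of_pos (Real.exp_pos _)]
      have e3 : |v y| ≤ V := by rw [← Real.norm_eq_abs]; exact hV y hy'
      calc Real.exp (-(Fg y)) * (|f y - g y| * |v y|)
          ≤ E * (|f y - g y| * V) :=
            mul_le_mul (hEg y hycd) (mul_le_mul_of_nonneg_left e3 (abs_nonneg _))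
              (by positivity) hEpos.le
      _ = (E * V) * |f y - g y| := by ring
    refine hmono.trans ?_
    rw [MeasureTheory.integral_const_mul]
    calc (E * V) * ∫ y in Set.uIoc a b, |f y - g y| ≤ (E * V) * η := by
          refine mul_le_mul_of_nonneg_left ?_ (by positivity)
          exact hIab b a hb' ha'
    _ = E * V * η := by ring
  have hb4 : |∫ y in a..b, (Real.exp (-(Fg y)) - Real.exp (-(∫ w in y₁..y, f w))) * h y|
      ≤ E * η * (Hb * (b - a)) := by
    have h5 : ∀ y ∈ Set.uIoc a b,
        ‖(Real.exp (-(Fg y)) - Real.exp (-(∫ w in y₁..y, f w))) * h y‖ ≤ E * η * Hb := by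
      intro y hy
      have hy' : y ∈ Icc a b := by
        rw [uIoc_of_le hab] at hy; exact Ioc_subset_Icc_self hy
      rw [Real.norm_eq_abs, abs_mul]
      refine mul_le_mul ?_ (by rw [← Real.norm_eq_abs]; exact hHb y hy') (abs_nonneg _)
        (by positivity)
      rw [abs_sub_comm]
      exact hexpdiff y (hsubab hy')
    have h6 := intervalIntegral.norm_integral_le_of_norm_le_const h5
    rw [Real.norm_eq_abs] at h6
    refine h6.trans ?_
    rw [abs_of_nonneg hba]
    ring_nf
    exact le_of_eq (by ring)
  -- assemble
  set D1 : ℝ := (Real.exp (-(∫ w in y₁..b, f w)) - Real.exp (-(Fg b))) * v b with hD1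
  set D2 : ℝ := (Real.exp (-(∫ w in y₁..a, f w)) - Real.exp (-(Fg a))) * v a with hD2
  set I3 : ℝ := ∫ y in a..b, Real.exp (-(Fg y)) * ((f y - g y) * v y) with hI3
  set I4 : ℝ := ∫ y in a..b, (Real.exp (-(Fg y)) - Real.exp (-(∫ w in y₁..y, f w))) * h y
    with hI4
  set I5 : ℝ := ∫ y in a..b, Real.exp (-(Fg y)) * h y with hI5
  have e5 : I4 = I5 - RHS := by
    rw [hI4, hI5, hRHS, ← intervalIntegral.integral_sub hint5 hintRHS]
    simp only [sub_mul]
  have e6 : I3 = (φ b - φ a) - I5 := by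
    rw [hI3, hI5, ← hFTC, hsplit]
    ring
  have hid : LHS - RHS = D1 - D2 + I3 + I4 := by
    rw [e6, e5, hLHS, hD1, hD2, hφdef]
    ring
  have habs1 : |D1 - D2| ≤ |D1| + |D2| := abs_sub _ _
  calc |LHS - RHS| = |D1 - D2 + I3 + I4| := by rw [hid]
  _ ≤ |D1 - D2 + I3| + |I4| := abs_add_le _ _
  _ ≤ |D1 - D2| + |I3| + |I4| := by linarith [abs_add_le (D1 - D2) I3]
  _ ≤ E * η * V + E * η * V + E * V * η + E * η * (Hb * (b - a)) := by
      linarith [hb12 b (right_mem_Icc.2 hab), hb12 a (left_mem_Icc.2 hab), hb3, hb4]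
  _ = K * η := by rw [hK, hE]; ring


lemma aux_noInt {c p q r : ℝ} (hc : 0 < c) (hpq : p < q) (hr : r = p ∨ r = q) (w : ℝ → ℝ)
    (hw : MeasureTheory.IntegrableOn w (Set.Ioo p q)) (hbd : ∀ y ∈ Set.Ioo p q, c * |y - r|⁻¹ ≤ |w y|) :
    False := by
  have hmeas : Measurable fun y : ℝ => (y - r)⁻¹ :=
    (measurable_id.sub_const r).inv
  have h1 : IntegrableOn (fun y => (y - r)⁻¹) (Set.Ioo p q) := by
    refine Integrable.mono' (hw.abs.const_mul c⁻¹) hmeas.aestronglyMeasurable.restrict ?_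
    filter_upwards [ae_restrict_mem measurableSet_Ioo] with y hy
    have hb := hbd y hy
    rw [Real.norm_eq_abs, abs_inv]
    calc |y - r|⁻¹ = c⁻¹ * (c * |y - r|⁻¹) := by field_simp
    _ ≤ c⁻¹ * |w y| := by gcongr
  have h2 : IntervalIntegrable (fun y => (y - r)⁻¹) volume p q := by
    rw [intervalIntegrable_iff_integrableOn_Ioc_of_le hpq.le]
    exact h1.congr_set_ae Ioo_ae_eq_Ioc.symm
  rw [intervalIntegrable_sub_inv_iff] at h2
  rcases h2 with h | h
  · exact absurd h hpq.ne
  · refine h ?_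
    rw [Set.uIcc_of_le hpq.le]
    rcases hr with rfl | rfl
    · exact Set.left_mem_Icc.2 hpq.le
    · exact Set.right_mem_Icc.2 hpq.le

/-- integration of (Gu)' = fGu + h near a simple zero y₁ of G:
    integrability of u forces the explicit formula, and h > 0 on a set of
    positive measure on one side of y₁ forces u < 0 somewhere on that side. -/
theorem stmt15 (y₁ ε M : ℝ) (hε : 0 < ε)
    (G f h u : ℝ → ℝ)
    (hG : ContDiff ℝ 1 G) (hGy₁ : G y₁ = 0) (hG' : deriv G y₁ < 0)
    (hGzero : ∀ y ∈ Set.Ioo (y₁ - ε) (y₁ + ε), G y = 0 → y = y₁)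
    (hf_meas : Measurable f) (hf_bdd : ∀ y, |f y| ≤ M)
    (hh_cont : Continuous h) (hh_nonneg : ∀ y ∈ Set.Ioo (y₁ - ε) (y₁ + ε), 0 ≤ h y)
    (hu_int : IntegrableOn u (Set.Ioo (y₁ - ε) (y₁ + ε)))
    (hode : ∀ y ∈ Set.Ioo (y₁ - ε) (y₁ + ε), y ≠ y₁ →
      HasDerivAt (fun z => G z * u z) (f y * G y * u y + h y) y) :
    (∀ y ∈ Set.Ioo (y₁ - ε) (y₁ + ε), y ≠ y₁ →
      u y = (1 / G y) * Real.exp (∫ s in y₁..y, f s) *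
        ∫ s in y₁..y, Real.exp (-(∫ w in y₁..s, f w)) * h s) ∧
    (∀ I : Set ℝ, (I = Set.Ioo y₁ (y₁ + ε) ∨ I = Set.Ioo (y₁ - ε) y₁) →
      0 < volume {y ∈ I | 0 < h y} → ∃ y ∈ I, u y < 0) := by
  have hM : 0 ≤ M := (abs_nonneg _).trans (hf_bdd 0)
  set v : ℝ → ℝ := fun z => G z * u z with hvdef
  set F : ℝ → ℝ := fun s => ∫ w in y₁..s, f w with hFdef
  set H : ℝ → ℝ := fun y => ∫ s in y₁..y, Real.exp (-(F s)) * h s with hHdef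
  have hFcont : Continuous F :=
    intervalIntegral.continuous_primitive (fun p q => aux_intInt hf_meas hf_bdd p q) y₁
  have hEfcont : Continuous fun s => Real.exp (-(F s)) := Real.continuous_exp.comp hFcont.neg
  have hintH : ∀ p q : ℝ, IntervalIntegrable (fun s => Real.exp (-(F s)) * h s) volume p q :=
    fun p q => (hEfcont.mul hh_cont).intervalIntegrable p q
  have hHcont : Continuous H := intervalIntegral.continuous_primitive hintH y₁
  have hF0 : F y₁ = 0 := intervalIntegral.integral_same
  have hH0 : H y₁ = 0 := intervalIntegral.integral_same
  have hFb : ∀ s : ℝ, |s - y₁| ≤ ε → |F s| ≤ M * ε := by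
    intro s hs
    calc |F s| ≤ M * |s - y₁| := by
          simpa [Real.norm_eq_abs] using
            intervalIntegral.norm_integral_le_of_norm_le_const
              (C := M) (f := f) (a := y₁) (b := s)
              (fun x _ => by simpa [Real.norm_eq_abs] using hf_bdd x)
    _ ≤ M * ε := mul_le_mul_of_nonneg_left hs hM
  -- the integrated identity on closed intervals avoiding y₁
  have hstar : ∀ p q : ℝ, p ≤ q → Set.Icc p q ⊆ Set.Ioo (y₁ - ε) (y₁ + ε) → y₁ ∉ Set.Icc p q →
      Real.exp (-(F q)) * v q - Real.exp (-(F p)) * v p = H q - H p := by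
    intro p q hpq hsub hnot
    have h1 := aux_star hf_meas hf_bdd hh_cont y₁ p q hpq (fun y hy => by
      have hyJ := hsub hy
      have hyne : y ≠ y₁ := fun he => hnot (he ▸ hy)
      have h2 := hode y hyJ hyne
      simpa [hvdef, mul_assoc] using h2)
    rw [h1, hHdef]
    rw [← intervalIntegral.integral_interval_sub_left (hintH y₁ q) (hintH y₁ p)]
  -- ψ is constant on each side of y₁
  set ψ : ℝ → ℝ := fun y => Real.exp (-(F y)) * v y - H y with hψdef
  have hψc : ∀ x z : ℝ, x ∈ Set.Ioo (y₁ - ε) (y₁ + ε) → z ∈ Set.Ioo (y₁ - ε) (y₁ + ε) →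
      ((y₁ < x ∧ y₁ < z) ∨ (x < y₁ ∧ z < y₁)) → ψ x = ψ z := by
    intro x z hx hz hside
    rcases le_total x z with hxz | hxz
    · have h1 := hstar x z hxz (fun t ht => ⟨by rcases hside with ⟨h1,_⟩|⟨h1,_⟩ <;>
          linarith [ht.1, hx.1], by rcases hside with _|_ <;> linarith [ht.2, hz.2]⟩)
        (by intro hmem; rcases hside with ⟨h1,h2⟩|⟨h1,h2⟩ <;> [linarith [hmem.1]; linarith [hmem.2]])
      simp only [hψdef]; linarith
    · have h1 := hstar z x hxz (fun t ht => ⟨by rcases hside with ⟨_,h1⟩|⟨_,h1⟩ <;>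
          linarith [ht.1, hz.1], by rcases hside with _|_ <;> linarith [ht.2, hx.2]⟩)
        (by intro hmem; rcases hside with ⟨h1,h2⟩|⟨h1,h2⟩ <;> [linarith [hmem.1]; linarith [hmem.2]])
      simp only [hψdef]; linarith
  -- integrability of u forces the constant to vanish
  set m : ℝ := Real.exp (-(M * ε)) with hmdef
  have hmpos : 0 < m := Real.exp_pos _
  have hGdiff : Differentiable ℝ G := hG.differentiable one_ne_zero
  set K : ℝ := |deriv G y₁| + 1 with hKdef
  have hK0 : 0 < K := by positivity
  obtain ⟨δ₂, hδ₂pos, hδ₂⟩ := Metric.continuousAt_iff.1 (hG.continuous_deriv le_rfl).continuousAt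
    1 one_pos
  have hGbd : ∀ z : ℝ, |z - y₁| < δ₂ → |G z| ≤ K * |z - y₁| := by
    intro z hz
    have hmvt := Convex.norm_image_sub_le_of_norm_hasDerivWithin_le
      (f := G) (f' := deriv G) (s := Metric.ball y₁ δ₂) (C := K)
      (fun x hx => ((hGdiff x).hasDerivAt).hasDerivWithinAt)
      (fun x hx => by
        have := hδ₂ (by simpa [Real.dist_eq] using hx)
        rw [Real.dist_eq] at this
        rw [Real.norm_eq_abs, hKdef]
        calc |deriv G x| ≤ |deriv G y₁| + |deriv G x - deriv G y₁| := by
              have := abs_add_le (deriv G y₁) (deriv G x - deriv G y₁)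
              simpa using this
        _ ≤ |deriv G y₁| + 1 := by linarith)
      (convex_ball _ _) (Metric.mem_ball_self hδ₂pos)
      (show z ∈ Metric.ball y₁ δ₂ by simpa [Real.dist_eq] using hz)
    simpa [hGy₁, Real.norm_eq_abs] using hmvt
  have hCzero : ∀ y ∈ Set.Ioo (y₁ - ε) (y₁ + ε), y ≠ y₁ → ψ y = 0 := by
    intro y hy hne
    by_contra hC
    have hCpos : 0 < |ψ y| := abs_pos.2 hC
    obtain ⟨δ₁, hδ₁pos, hδ₁⟩ := Metric.continuousAt_iff.1 hHcont.continuousAt (|ψ y| / 2)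
      (by positivity)
    set δ : ℝ := min (min δ₁ δ₂) ε with hδdef
    have hδpos : 0 < δ := lt_min (lt_min hδ₁pos hδ₂pos) hε
    have hδε : δ ≤ ε := min_le_right _ _
    have hδ1 : δ ≤ δ₁ := (min_le_left _ _).trans (min_le_left _ _)
    have hδ2 : δ ≤ δ₂ := (min_le_left _ _).trans (min_le_right _ _)
    -- on the side of y, every z in a small punctured interval has ψ z = ψ y and the lower bound
    have hmain : ∀ z ∈ Set.Ioo (y₁ - ε) (y₁ + ε), z ≠ y₁ → |z - y₁| < δ →
        ((y₁ < y ∧ y₁ < z) ∨ (y < y₁ ∧ z < y₁)) →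
        m * |ψ y| / (2 * K) * |z - y₁|⁻¹ ≤ |u z| := by
      intro z hzJ hzne hzδ hside
      have hGz : G z ≠ 0 := fun h0 => hzne (hGzero z hzJ h0)
      have hψz : ψ z = ψ y := (hψc z y hzJ hy (by tauto)).symm ▸ rfl
      have hψz' : ψ z = ψ y := by
        rcases hside with ⟨h1, h2⟩ | ⟨h1, h2⟩
        · exact hψc z y hzJ hy (Or.inl ⟨h2, h1⟩)
        · exact hψc z y hzJ hy (Or.inr ⟨h2, h1⟩)
      have hHz : |H z| < |ψ y| / 2 := by
        have := hδ₁ (x := z) (by rw [Real.dist_eq]; exact lt_of_lt_of_le hzδ hδ1)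
        rwa [Real.dist_eq, hH0, sub_zero] at this
      have hvz : Real.exp (-(F z)) * v z = ψ y + H z := by
        have : ψ z = Real.exp (-(F z)) * v z - H z := rfl
        rw [hψz'] at this
        linarith
      have hexpz : m ≤ Real.exp (-(F z)) := by
        rw [hmdef]
        apply Real.exp_le_exp.2
        have := hFb z (by linarith [abs_nonneg (z - y₁)])
        have h8 := (abs_le.1 (hFb z (le_of_lt (lt_of_lt_of_le hzδ hδε)))).2
        linarith
      have hvz2 : v z = Real.exp (F z) * (ψ y + H z) := by
        rw [← hvz, ← mul_assoc, ← Real.exp_add]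
        simp
      have h9 : |ψ y| / 2 ≤ |ψ y + H z| := by
        have := abs_add_le (ψ y + H z) (-(H z))
        simp only [add_neg_cancel_right, abs_neg] at this
        linarith
      have hvlow : m * (|ψ y| / 2) ≤ |v z| := by
        rw [hvz2, abs_mul, abs_of_pos (Real.exp_pos _)]
        have hm2 : m ≤ Real.exp (F z) := by
          rw [hmdef]
          apply Real.exp_le_exp.2
          have h8 := (abs_le.1 (hFb z (le_of_lt (lt_of_lt_of_le hzδ hδε)))).1
          linarith
        exact mul_le_mul hm2 h9 (by positivity) (Real.exp_pos _).le
      have hGb := hGbd z (lt_of_lt_of_le hzδ hδ2)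
      have hzpos : 0 < |z - y₁| := abs_pos.2 (sub_ne_zero.2 hzne)
      rw [← div_eq_mul_inv, div_le_iff₀ hzpos, div_le_iff₀ (by positivity : (0:ℝ) < 2 * K)]
      have hvuz : |v z| = |G z| * |u z| := by rw [hvdef]; exact abs_mul _ _
      nlinarith [mul_le_mul_of_nonneg_right hGb (abs_nonneg (u z)), abs_nonneg (u z), hK0,
        hvlow, hCpos]
    rcases lt_or_gt_of_ne hne with hyl | hyr
    · -- y is on the left of y₁
      refine aux_noInt (c := m * |ψ y| / (2 * K)) (by positivity)
        (show y₁ - δ < y₁ by linarith) (Or.inr rfl) u (hu_int.mono_set ?_) ?_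
      · intro t ht
        exact ⟨by linarith [ht.1, hδε], by linarith [ht.2]⟩
      · intro t ht
        refine hmain t ⟨by linarith [ht.1, hδε], by linarith [ht.2]⟩ (ne_of_lt ht.2) ?_
          (Or.inr ⟨hyl, ht.2⟩)
        rw [abs_lt]
        constructor <;> linarith [ht.1, ht.2]
    · -- y is on the right of y₁
      refine aux_noInt (c := m * |ψ y| / (2 * K)) (by positivity)
        (show y₁ < y₁ + δ by linarith) (Or.inl rfl) u (hu_int.mono_set ?_) ?_
      · intro t ht
        exact ⟨by linarith [ht.1], by linarith [ht.2, hδε]⟩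
      · intro t ht
        refine hmain t ⟨by linarith [ht.1], by linarith [ht.2, hδε]⟩ (ne_of_gt ht.1) ?_
          (Or.inl ⟨hyr, ht.1⟩)
        rw [abs_lt]
        constructor <;> linarith [ht.1, ht.2]
  -- the explicit formula
  have hform : ∀ y ∈ Set.Ioo (y₁ - ε) (y₁ + ε), y ≠ y₁ →
      u y = (1 / G y) * Real.exp (F y) * H y := by
    intro y hy hne
    have hGy : G y ≠ 0 := fun h0 => hne (hGzero y hy h0)
    have h8 : Real.exp (-(F y)) * v y - H y = 0 := hCzero y hy hne
    have h9 : v y = Real.exp (F y) * H y := by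
      have h10 : Real.exp (F y) * (Real.exp (-(F y)) * v y) = Real.exp (F y) * H y := by
        rw [show Real.exp (-(F y)) * v y = H y by linarith]
      rwa [← mul_assoc, ← Real.exp_add, add_neg_cancel, Real.exp_zero, one_mul] at h10
    have h10 : G y * u y = Real.exp (F y) * H y := by simpa [hvdef] using h9
    field_simp
    linear_combination h10
  refine ⟨hform, ?_⟩
  -- sign of G on each side
  have hGderiv : HasDerivAt G (deriv G y₁) y₁ := (hGdiff y₁).hasDerivAt
  have hslope := hasDerivAt_iff_tendsto_slope.1 hGderiv
  have hev : ∀ᶠ z in 𝓝[≠] y₁, slope G y₁ z < 0 := hslope.eventually_lt_const hG'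
  have hexr : ∃ y₂ ∈ Set.Ioo y₁ (y₁ + ε), G y₂ < 0 := by
    have hev2 : ∀ᶠ z in 𝓝[>] y₁, slope G y₁ z < 0 :=
      hev.filter_mono (nhdsWithin_mono y₁ fun z hz => ne_of_gt hz)
    have hmem : Set.Ioo y₁ (y₁ + ε) ∈ 𝓝[>] y₁ :=
      Ioo_mem_nhdsGT_of_mem ⟨le_refl _, by linarith⟩
    obtain ⟨z, hz1, hz2⟩ := (hev2.and (eventually_of_mem hmem fun t ht => ht)).exists
    refine ⟨z, hz2, ?_⟩
    have hzpos : 0 < z - y₁ := sub_pos.2 hz2.1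
    have hsl : slope G y₁ z = G z / (z - y₁) := by rw [slope_def_field, hGy₁, sub_zero]
    rw [hsl] at hz1
    have := mul_lt_mul_of_pos_right hz1 hzpos
    rw [div_mul_cancel₀ _ (ne_of_gt hzpos)] at this
    linarith
  have hexl : ∃ y₂ ∈ Set.Ioo (y₁ - ε) y₁, 0 < G y₂ := by
    have hev2 : ∀ᶠ z in 𝓝[<] y₁, slope G y₁ z < 0 :=
      hev.filter_mono (nhdsWithin_mono y₁ fun z hz => ne_of_lt hz)
    have hmem : Set.Ioo (y₁ - ε) y₁ ∈ 𝓝[<] y₁ :=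
      Ioo_mem_nhdsLT_of_mem ⟨by linarith, le_refl _⟩
    obtain ⟨z, hz1, hz2⟩ := (hev2.and (eventually_of_mem hmem fun t ht => ht)).exists
    refine ⟨z, hz2, ?_⟩
    have hzneg : z - y₁ < 0 := sub_neg.2 hz2.2
    have hsl : slope G y₁ z = G z / (z - y₁) := by rw [slope_def_field, hGy₁, sub_zero]
    rw [hsl] at hz1
    have := mul_lt_mul_of_neg_right hz1 hzneg
    rw [div_mul_cancel₀ _ (ne_of_lt hzneg)] at this
    linarith
  have hsub1 : Set.Ioo y₁ (y₁ + ε) ⊆ Set.Ioo (y₁ - ε) (y₁ + ε) := fun t ht =>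
    ⟨by linarith [ht.1], ht.2⟩
  have hsub2 : Set.Ioo (y₁ - ε) y₁ ⊆ Set.Ioo (y₁ - ε) (y₁ + ε) := fun t ht =>
    ⟨ht.1, by linarith [ht.2]⟩
  have hGneg : ∀ y ∈ Set.Ioo y₁ (y₁ + ε), G y < 0 := by
    intro y hy
    rcases lt_trichotomy (G y) 0 with hlt | heq | hgt
    · exact hlt
    · exact absurd (hGzero y (hsub1 hy) heq) (ne_of_gt hy.1)
    · obtain ⟨y₂, hy₂, hGy₂⟩ := hexr
      have hcont : ContinuousOn G (Set.uIcc y₂ y) := hG.continuous.continuousOn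
      have h0mem : (0:ℝ) ∈ Set.uIcc (G y₂) (G y) := Set.mem_uIcc.2 (Or.inl ⟨hGy₂.le, hgt.le⟩)
      obtain ⟨z, hz, hGz⟩ := intermediate_value_uIcc hcont h0mem
      have hzI : z ∈ Set.Ioo y₁ (y₁ + ε) := (Set.ordConnected_Ioo.uIcc_subset hy₂ hy) hz
      exact absurd (hGzero z (hsub1 hzI) hGz) (ne_of_gt hzI.1)
  have hGpos : ∀ y ∈ Set.Ioo (y₁ - ε) y₁, 0 < G y := by
    intro y hy
    rcases lt_trichotomy (G y) 0 with hlt | heq | hgt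
    · obtain ⟨y₂, hy₂, hGy₂⟩ := hexl
      have hcont : ContinuousOn G (Set.uIcc y₂ y) := hG.continuous.continuousOn
      have h0mem : (0:ℝ) ∈ Set.uIcc (G y₂) (G y) := Set.mem_uIcc.2 (Or.inr ⟨hlt.le, hGy₂.le⟩)
      obtain ⟨z, hz, hGz⟩ := intermediate_value_uIcc hcont h0mem
      have hzI : z ∈ Set.Ioo (y₁ - ε) y₁ := (Set.ordConnected_Ioo.uIcc_subset hy₂ hy) hz
      exact absurd (hGzero z (hsub2 hzI) hGz) (ne_of_lt hzI.2)
    · exact absurd (hGzero y (hsub2 hy) heq) (ne_of_lt hy.2)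
    · exact hgt
  -- part 2
  intro I hI hpos
  have hIopen : IsOpen I := by rcases hI with rfl | rfl <;> exact isOpen_Ioo
  have hSopen : IsOpen {y ∈ I | 0 < h y} := by
    have he : {y ∈ I | 0 < h y} = I ∩ h ⁻¹' Set.Ioi 0 := rfl
    rw [he]
    exact hIopen.inter (isOpen_Ioi.preimage hh_cont)
  obtain ⟨y₀, hy₀⟩ := nonempty_of_measure_ne_zero hpos.ne'
  obtain ⟨r, hr, hball⟩ := Metric.isOpen_iff.1 hSopen y₀ hy₀
  rw [Real.ball_eq_Ioo] at hball
  rcases hI with rfl | rfl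
  · -- right side
    have hmem1 : y₀ + r / 2 ∈ {y ∈ Set.Ioo y₁ (y₁ + ε) | 0 < h y} :=
      hball ⟨by linarith, by linarith⟩
    have hmem2 : y₀ - r / 2 ∈ {y ∈ Set.Ioo y₁ (y₁ + ε) | 0 < h y} :=
      hball ⟨by linarith, by linarith⟩
    refine ⟨y₀ + r / 2, hmem1.1, ?_⟩
    have hyI : y₀ + r / 2 ∈ Set.Ioo y₁ (y₁ + ε) := hmem1.1
    have hJy : y₀ + r / 2 ∈ Set.Ioo (y₁ - ε) (y₁ + ε) := hsub1 hyI
    rw [hform _ hJy (ne_of_gt hyI.1)]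
    have h1 : 0 < ∫ s in (y₀ - r / 2)..(y₀ + r / 2), Real.exp (-(F s)) * h s := by
      refine intervalIntegral_pos_of_pos_on (hintH _ _) ?_ (by linarith)
      intro x hx
      have hxS := hball (show x ∈ Set.Ioo (y₀ - r) (y₀ + r) from
        ⟨by linarith [hx.1], by linarith [hx.2]⟩)
      exact mul_pos (Real.exp_pos _) hxS.2
    have h2 : 0 ≤ ∫ s in y₁..(y₀ - r / 2), Real.exp (-(F s)) * h s := by
      refine intervalIntegral.integral_nonneg (by linarith [hmem2.1.1]) ?_
      intro s hs
      have hsJ : s ∈ Set.Ioo (y₁ - ε) (y₁ + ε) :=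
        ⟨by linarith [hs.1], by linarith [hs.2, hmem2.1.2]⟩
      exact mul_nonneg (Real.exp_pos _).le (hh_nonneg s hsJ)
    have hHy : 0 < H (y₀ + r / 2) := by
      have h3 := intervalIntegral.integral_add_adjacent_intervals
        (hintH y₁ (y₀ - r / 2)) (hintH (y₀ - r / 2) (y₀ + r / 2))
      have h4 : H (y₀ + r / 2) = (∫ s in y₁..(y₀ - r / 2), Real.exp (-(F s)) * h s)
          + ∫ s in (y₀ - r / 2)..(y₀ + r / 2), Real.exp (-(F s)) * h s := h3.symm
      rw [h4]
      linarith
    have hGy : G (y₀ + r / 2) < 0 := hGneg _ hyI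
    have h5 : 1 / G (y₀ + r / 2) < 0 := div_neg_of_pos_of_neg one_pos hGy
    exact mul_neg_of_neg_of_pos (mul_neg_of_neg_of_pos h5 (Real.exp_pos _)) hHy
  · -- left side
    have hmem1 : y₀ - r / 2 ∈ {y ∈ Set.Ioo (y₁ - ε) y₁ | 0 < h y} :=
      hball ⟨by linarith, by linarith⟩
    have hmem2 : y₀ + r / 2 ∈ {y ∈ Set.Ioo (y₁ - ε) y₁ | 0 < h y} :=
      hball ⟨by linarith, by linarith⟩
    refine ⟨y₀ - r / 2, hmem1.1, ?_⟩
    have hyI : y₀ - r / 2 ∈ Set.Ioo (y₁ - ε) y₁ := hmem1.1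
    have hJy : y₀ - r / 2 ∈ Set.Ioo (y₁ - ε) (y₁ + ε) := hsub2 hyI
    rw [hform _ hJy (ne_of_lt hyI.2)]
    have h1 : 0 < ∫ s in (y₀ - r / 2)..(y₀ + r / 2), Real.exp (-(F s)) * h s := by
      refine intervalIntegral_pos_of_pos_on (hintH _ _) ?_ (by linarith)
      intro x hx
      have hxS := hball (show x ∈ Set.Ioo (y₀ - r) (y₀ + r) from
        ⟨by linarith [hx.1], by linarith [hx.2]⟩)
      exact mul_pos (Real.exp_pos _) hxS.2
    have h2 : 0 ≤ ∫ s in (y₀ + r / 2)..y₁, Real.exp (-(F s)) * h s := by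
      refine intervalIntegral.integral_nonneg (by linarith [hmem2.1.2]) ?_
      intro s hs
      have hsJ : s ∈ Set.Ioo (y₁ - ε) (y₁ + ε) :=
        ⟨by linarith [hs.1, hmem2.1.1], by linarith [hs.2]⟩
      exact mul_nonneg (Real.exp_pos _).le (hh_nonneg s hsJ)
    have hHy : H (y₀ - r / 2) < 0 := by
      have h3 := intervalIntegral.integral_add_adjacent_intervals
        (hintH (y₀ - r / 2) (y₀ + r / 2)) (hintH (y₀ + r / 2) y₁)
      have h4 : H (y₀ - r / 2) = -∫ s in (y₀ - r / 2)..y₁, Real.exp (-(F s)) * h s :=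
        intervalIntegral.integral_symm _ _
      rw [h4]
      linarith [h3]
    have hGy : 0 < G (y₀ - r / 2) := hGpos _ hyI
    have h5 : 0 < 1 / G (y₀ - r / 2) := by positivity
    exact mul_neg_of_pos_of_neg (mul_pos h5 (Real.exp_pos _)) hHy
end
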